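/- The translations of ℝ³ act on graphs over the sphere: for sufficiently small τ, δ > 0, for each z, w ∈ ℝ³ with |z|, |w|, |z+w| < τ and each ρ ∈ C¹(S²) with ‖ρ‖_{C¹} < δ, the operator S_z^* defined by 'the translate by z of the surface r = 1+ρ(ω) is the surface r = 1 + S_z^*(ρ)(ω)' is well defined and satisfies S_z^* ∘ S_w^* = S_{z+w}^*, S_0^* = id, and (S_z^*)^{-1} = S_{−z}^*. -/

import Mathlib

noncomputable section
open Set

local notation "E" => EuclideanSpace ℝ (Fin 3)

def Mset (ρ : E → ℝ) : Set E := {y : E | ∃ ω : E, ‖ω‖ = 1 ∧ y = (1 + ρ ω) • ω}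

open Classical in
def Sop (z : E) (ρ : E → ℝ) (ω : E) : ℝ :=
  if h : ∃ r : ℝ, 0 < r ∧ r • ω - z ∈ Mset ρ then h.choose - 1 else 0

/-- Lipschitz bound from derivative bound. -/
lemma lip_of_deriv (ρ : E → ℝ) (hρ : ContDiff ℝ 1 ρ)
    (hd : ∀ x, ‖fderiv ℝ ρ x‖ < (1:ℝ)/100) (x y : E) :
    |ρ x - ρ y| ≤ (1/100) * ‖x - y‖ := by
  have := (convex_univ : Convex ℝ (univ : Set E)).norm_image_sub_le_of_norm_fderiv_le
    (f := ρ) (C := 1/100)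
    (fun t _ => (hρ.differentiable one_ne_zero).differentiableAt)
    (fun t _ => (hd t).le) (mem_univ y) (mem_univ x)
  simpa [Real.norm_eq_abs] using this

/-- difference of unit vectors -/
lemma unit_diff (a b : E) (ha : a ≠ 0) (hb : b ≠ 0) :
    ‖‖b‖⁻¹ • b - ‖a‖⁻¹ • a‖ ≤ 2 * ‖b - a‖ / ‖b‖ := by
  have hna : (0:ℝ) < ‖a‖ := norm_pos_iff.mpr ha
  have hnb : (0:ℝ) < ‖b‖ := norm_pos_iff.mpr hb
  have key : ‖b‖⁻¹ • b - ‖a‖⁻¹ • a = ‖b‖⁻¹ • (b - a) + (‖b‖⁻¹ - ‖a‖⁻¹) • a := by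
    rw [smul_sub, sub_smul]; abel
  rw [key]
  have h1 : ‖‖b‖⁻¹ • (b - a)‖ = ‖b - a‖ / ‖b‖ := by
    rw [norm_smul, norm_inv, norm_norm]; ring
  have h2 : ‖(‖b‖⁻¹ - ‖a‖⁻¹) • a‖ ≤ ‖a - b‖ / ‖b‖ := by
    rw [norm_smul, Real.norm_eq_abs]
    have e : ‖b‖⁻¹ - ‖a‖⁻¹ = (‖a‖ - ‖b‖) / (‖a‖ * ‖b‖) := by
      field_simp
    rw [e, abs_div, abs_of_pos (mul_pos hna hnb), div_mul_eq_mul_div,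
      div_le_div_iff₀ (mul_pos hna hnb) hnb]
    calc |‖a‖ - ‖b‖| * ‖a‖ * ‖b‖ ≤ ‖a - b‖ * ‖a‖ * ‖b‖ := by
          gcongr; exact abs_norm_sub_norm_le a b
      _ = ‖a - b‖ * (‖a‖ * ‖b‖) := by ring
  calc ‖‖b‖⁻¹ • (b - a) + (‖b‖⁻¹ - ‖a‖⁻¹) • a‖
      ≤ ‖‖b‖⁻¹ • (b - a)‖ + ‖(‖b‖⁻¹ - ‖a‖⁻¹) • a‖ := norm_add_le _ _
    _ ≤ ‖b - a‖ / ‖b‖ + ‖a - b‖ / ‖b‖ := by rw [h1]; gcongr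
    _ = 2 * ‖b - a‖ / ‖b‖ := by rw [norm_sub_rev a b]; ring

lemma Mset_props (ρ : E → ℝ) (hb : ∀ x, |ρ x| < (1:ℝ)/100) {y : E} (hy : y ∈ Mset ρ) :
    ‖y‖ = 1 + ρ (‖y‖⁻¹ • y) ∧ 99/100 < ‖y‖ ∧ ‖y‖ < 101/100 := by
  obtain ⟨ω', hω', hyy⟩ := hy
  have hb' := abs_lt.mp (hb ω')
  have hpos : (0:ℝ) < 1 + ρ ω' := by linarith [hb'.1]
  have hn : ‖y‖ = 1 + ρ ω' := by
    rw [hyy, norm_smul, Real.norm_eq_abs, abs_of_pos hpos, hω', mul_one]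
  have hu : ‖y‖⁻¹ • y = ω' := by
    rw [hn, hyy, smul_smul, inv_mul_cancel₀ hpos.ne', one_smul]
  refine ⟨by rw [hu, hn], by rw [hn]; linarith [hb'.1], by rw [hn]; linarith [hb'.2]⟩

set_option maxHeartbeats 1000000 in
lemma unique_r_le (ρ : E → ℝ) (hρ : ContDiff ℝ 1 ρ)
    (hb : ∀ x, |ρ x| < (1:ℝ)/100 ∧ ‖fderiv ℝ ρ x‖ < (1:ℝ)/100)
    (v : E) (hv : ‖v‖ ≤ 1/50) (ω : E) (hω : ‖ω‖ = 1) {r1 r2 : ℝ}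
    (hr1 : 0 < r1) (hr2 : 0 < r2)
    (m1 : r1 • ω - v ∈ Mset ρ) (m2 : r2 • ω - v ∈ Mset ρ) (hle : r1 ≤ r2) : r2 ≤ r1 := by
  set a1 : E := r1 • ω - v with ha1
  set a2 : E := r2 • ω - v with ha2
  obtain ⟨na1, lb1, ub1⟩ := Mset_props ρ (fun x => (hb x).1) m1
  obtain ⟨na2, lb2, ub2⟩ := Mset_props ρ (fun x => (hb x).1) m2
  have hane1 : a1 ≠ 0 := by intro h; rw [h] at lb1; simp at lb1; linarith
  have hane2 : a2 ≠ 0 := by intro h; rw [h] at lb2; simp at lb2; linarith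
  set u1 : E := ‖a1‖⁻¹ • a1 with hu1
  set u2 : E := ‖a2‖⁻¹ • a2 with hu2
  -- r bounds
  have hrn : ∀ r : ℝ, 0 < r → r = ‖(r • ω - v) + v‖ := by
    intro r hr
    have hc : (r • ω - v) + v = r • ω := by abel
    rw [hc, norm_smul, Real.norm_eq_abs, abs_of_pos hr, hω, mul_one]
  have hrn1 : r1 = ‖a1 + v‖ := by rw [ha1]; exact hrn r1 hr1
  have hrn2 : r2 = ‖a2 + v‖ := by rw [ha2]; exact hrn r2 hr2
  have hrlb1 : 97/100 ≤ r1 := by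
    have h := norm_sub_le (a1 + v) v
    rw [add_sub_cancel_right, ← hrn1] at h
    linarith
  have hrlb2 : 97/100 ≤ r2 := by
    have h := norm_sub_le (a2 + v) v
    rw [add_sub_cancel_right, ← hrn2] at h
    linarith
  -- squared norm identity
  set I : ℝ := inner ℝ ω v with hI
  have hIb : |I| ≤ 1/50 := by
    have := abs_real_inner_le_norm ω v; rw [hω, one_mul] at this; linarith
  have esq : ∀ r : ℝ, ‖r • ω - v‖^2 = r^2 - 2*r*I + ‖v‖^2 := by
    intro r
    rw [norm_sub_sq_real]
    rw [norm_smul, real_inner_smul_left, Real.norm_eq_abs, hω, mul_one, ← hI]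
    rw [sq_abs]; ring
  have e1 : ‖a1‖^2 = r1^2 - 2*r1*I + ‖v‖^2 := by rw [ha1]; exact esq r1
  have e2 : ‖a2‖^2 = r2^2 - 2*r2*I + ‖v‖^2 := by rw [ha2]; exact esq r2
  -- Lipschitz chain
  have hdiff : a2 - a1 = (r2 - r1) • ω := by rw [ha1, ha2, sub_smul]; abel
  have hnd : ‖a2 - a1‖ = r2 - r1 := by
    rw [hdiff, norm_smul, Real.norm_eq_abs, abs_of_nonneg (by linarith), hω, mul_one]
  have hud : ‖u2 - u1‖ ≤ 2 * (r2 - r1) / ‖a2‖ := by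
    have := unit_diff a1 a2 hane1 hane2; rw [hnd] at this; exact this
  have hlip : |ρ u2 - ρ u1| ≤ (1/100) * ‖u2 - u1‖ :=
    lip_of_deriv ρ hρ (fun x => (hb x).2) u2 u1
  have heq : ‖a2‖ - ‖a1‖ = ρ u2 - ρ u1 := by rw [na1, na2]; ring
  -- combine
  have key1 : (‖a2‖ - ‖a1‖) * ‖a2‖ ≤ (1/100) * (2 * (r2 - r1)) := by
    have h1 : ρ u2 - ρ u1 ≤ (1/100) * (2 * (r2 - r1) / ‖a2‖) :=
      le_trans (le_trans (le_abs_self _) hlip) (by gcongr)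
    rw [heq]
    have hA2 : (0:ℝ) < ‖a2‖ := by linarith
    calc (ρ u2 - ρ u1) * ‖a2‖ ≤ ((1/100) * (2 * (r2 - r1) / ‖a2‖)) * ‖a2‖ := by gcongr
      _ = (1/100) * (2 * (r2 - r1)) := by field_simp
  have hd : ‖a2‖ - ‖a1‖ ≤ (r2 - r1) / 40 := by
    by_contra hcon
    push_neg at hcon
    nlinarith [key1, lb2, hle]
  have ht : (0:ℝ) ≤ r2 - r1 := sub_nonneg.2 hle
  by_contra hcon
  push_neg at hcon
  have ht' : (0:ℝ) < r2 - r1 := sub_pos.2 hcon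
  have hmul : (‖a2‖ - ‖a1‖) * (‖a2‖ + ‖a1‖) ≤ ((r2 - r1)/40) * (202/100) := by
    nlinarith [hd, lb1, lb2, ub1, ub2, ht]
  have hexp : ‖a2‖^2 - ‖a1‖^2 = (‖a2‖ - ‖a1‖) * (‖a2‖ + ‖a1‖) := by ring
  have e3 : (19/10)*(r2 - r1) ≤ ‖a2‖^2 - ‖a1‖^2 := by
    nlinarith [e1, e2, hrlb1, hrlb2,
      mul_nonneg ht'.le (show (0:ℝ) ≤ 1/50 - I by linarith [(abs_le.mp hIb).2]),
      mul_nonneg ht'.le (show (0:ℝ) ≤ r1 + r2 - 194/100 by linarith)]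
  linarith

lemma unique_r (ρ : E → ℝ) (hρ : ContDiff ℝ 1 ρ)
    (hb : ∀ x, |ρ x| < (1:ℝ)/100 ∧ ‖fderiv ℝ ρ x‖ < (1:ℝ)/100)
    (v : E) (hv : ‖v‖ ≤ 1/50) (ω : E) (hω : ‖ω‖ = 1) {r1 r2 : ℝ}
    (hr1 : 0 < r1) (hr2 : 0 < r2)
    (m1 : r1 • ω - v ∈ Mset ρ) (m2 : r2 • ω - v ∈ Mset ρ) : r1 = r2 := by
  rcases le_total r1 r2 with h | h
  · exact le_antisymm h (unique_r_le ρ hρ hb v hv ω hω hr1 hr2 m1 m2 h)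
  · exact (le_antisymm h (unique_r_le ρ hρ hb v hv ω hω hr2 hr1 m2 m1 h)).symm

lemma exists_r (ρ : E → ℝ) (hρ : ContDiff ℝ 1 ρ)
    (hb : ∀ x, |ρ x| < (1:ℝ)/100 ∧ ‖fderiv ℝ ρ x‖ < (1:ℝ)/100)
    (v : E) (hv : ‖v‖ ≤ 1/50) (ω : E) (hω : ‖ω‖ = 1) :
    ∃ r : ℝ, 0 < r ∧ r • ω - v ∈ Mset ρ := by
  set g : ℝ → E := fun r => r • ω - v with hg
  have hgc : Continuous g := (continuous_id.smul continuous_const).sub continuous_const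
  have hgne : ∀ r ∈ Icc (4/5 : ℝ) (6/5 : ℝ), g r ≠ 0 := by
    intro r hr h0
    have h1 : ‖g r‖ = 0 := by rw [h0, norm_zero]
    have h2 : r = ‖g r + v‖ := by
      have : g r + v = r • ω := by rw [hg]; simp
      rw [this, norm_smul, Real.norm_eq_abs, abs_of_pos (by linarith [hr.1]), hω, mul_one]
    have := norm_add_le (g r) v
    rw [← h2, h1] at this
    have := hr.1; linarith
  set f : ℝ → ℝ := fun r => ‖g r‖ - ρ (‖g r‖⁻¹ • g r) with hf
  have hfc : ContinuousOn f (Icc (4/5 : ℝ) (6/5 : ℝ)) := by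
    have h1 : ContinuousOn (fun r => ‖g r‖) (Icc (4/5 : ℝ) (6/5 : ℝ)) :=
      hgc.norm.continuousOn
    have h2 : ContinuousOn (fun r => ‖g r‖⁻¹ • g r) (Icc (4/5 : ℝ) (6/5 : ℝ)) :=
      (h1.inv₀ (fun r hr => norm_ne_zero_iff.2 (hgne r hr))).smul hgc.continuousOn
    exact h1.sub (hρ.continuous.comp_continuousOn h2)
  have hb1 : ∀ x, -(1/100 : ℝ) < ρ x ∧ ρ x < 1/100 := fun x => abs_lt.mp (hb x).1
  have hnorm : ∀ r : ℝ, 0 < r → r - 1/50 ≤ ‖g r‖ ∧ ‖g r‖ ≤ r + 1/50 := by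
    intro r hr
    have h2 : ‖r • ω‖ = r := by
      rw [norm_smul, Real.norm_eq_abs, abs_of_pos hr, hω, mul_one]
    constructor
    · have := norm_sub_norm_le (r • ω) v; rw [h2] at this; linarith
    · have := norm_sub_le (r • ω) v; rw [h2] at this; linarith
  have hfa : f (4/5) ≤ 1 := by
    have h1 := (hnorm (4/5) (by norm_num)).2
    have h2 := (hb1 (‖g (4/5)‖⁻¹ • g (4/5))).1
    simp only [hf]; linarith
  have hfb : (1:ℝ) ≤ f (6/5) := by
    have h1 := (hnorm (6/5) (by norm_num)).1
    have h2 := (hb1 (‖g (6/5)‖⁻¹ • g (6/5))).2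
    simp only [hf]; linarith
  have hmem : (1:ℝ) ∈ Icc (f (4/5)) (f (6/5)) := ⟨hfa, hfb⟩
  obtain ⟨r, hrI, hfr⟩ := intermediate_value_Icc (by norm_num : (4/5:ℝ) ≤ 6/5) hfc hmem
  refine ⟨r, by linarith [hrI.1], ?_⟩
  have hne : g r ≠ 0 := hgne r hrI
  have hnpos : (0:ℝ) < ‖g r‖ := norm_pos_iff.mpr hne
  set u : E := ‖g r‖⁻¹ • g r with hu
  have hun : ‖u‖ = 1 := by
    rw [hu, norm_smul, norm_inv, norm_norm, inv_mul_cancel₀ hnpos.ne']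
  have hgn : ‖g r‖ = 1 + ρ u := by
    have : ‖g r‖ - ρ u = 1 := hfr
    linarith
  refine ⟨u, hun, ?_⟩
  show g r = (1 + ρ u) • u
  rw [← hgn, hu, smul_smul, mul_inv_cancel₀ hnpos.ne', one_smul]

lemma Sop_spec (ρ : E → ℝ) (hρ : ContDiff ℝ 1 ρ)
    (hb : ∀ x, |ρ x| < (1:ℝ)/100 ∧ ‖fderiv ℝ ρ x‖ < (1:ℝ)/100)
    (z : E) (hz : ‖z‖ ≤ 1/50) (ω : E) (hω : ‖ω‖ = 1) :
    0 < 1 + Sop z ρ ω ∧ (1 + Sop z ρ ω) • ω - z ∈ Mset ρ := by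
  have hex := exists_r ρ hρ hb z hz ω hω
  have hc := hex.choose_spec
  have hS : Sop z ρ ω = hex.choose - 1 := by
    simp only [Sop, dif_pos hex]
  rw [hS]
  have h1 : 1 + (hex.choose - 1) = hex.choose := by ring
  rw [h1]
  exact hc

lemma Sop_eq (ρ : E → ℝ) (hρ : ContDiff ℝ 1 ρ)
    (hb : ∀ x, |ρ x| < (1:ℝ)/100 ∧ ‖fderiv ℝ ρ x‖ < (1:ℝ)/100)
    (z : E) (hz : ‖z‖ ≤ 1/50) (ω : E) (hω : ‖ω‖ = 1) {r : ℝ}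
    (hr : 0 < r) (hm : r • ω - z ∈ Mset ρ) : Sop z ρ ω = r - 1 := by
  obtain ⟨hpos, hmem⟩ := Sop_spec ρ hρ hb z hz ω hω
  have := unique_r ρ hρ hb z hz ω hω hpos hr hmem hm
  linarith

lemma graph_eq (ρ : E → ℝ) (hρ : ContDiff ℝ 1 ρ)
    (hb : ∀ x, |ρ x| < (1:ℝ)/100 ∧ ‖fderiv ℝ ρ x‖ < (1:ℝ)/100)
    (z : E) (hz : ‖z‖ ≤ 1/50) :
    Mset (Sop z ρ) = (fun y => y + z) '' Mset ρ := by
  ext y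
  constructor
  · rintro ⟨ω, hω, rfl⟩
    exact ⟨(1 + Sop z ρ ω) • ω - z, (Sop_spec ρ hρ hb z hz ω hω).2, by simp⟩
  · rintro ⟨x, hx, rfl⟩
    obtain ⟨-, hxlb, -⟩ := Mset_props ρ (fun t => (hb t).1) hx
    have hR : (0:ℝ) < ‖x + z‖ := by
      have := norm_sub_norm_le x (-z)
      simp only [sub_neg_eq_add, norm_neg] at this
      linarith
    set ω : E := ‖x + z‖⁻¹ • (x + z) with hω
    have hωn : ‖ω‖ = 1 := by
      rw [hω, norm_smul, norm_inv, norm_norm, inv_mul_cancel₀ hR.ne']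
    have hrec : ‖x + z‖ • ω = x + z := by
      rw [hω, smul_smul, mul_inv_cancel₀ hR.ne', one_smul]
    have hmem : ‖x + z‖ • ω - z ∈ Mset ρ := by rw [hrec]; simpa using hx
    have hS : Sop z ρ ω = ‖x + z‖ - 1 := Sop_eq ρ hρ hb z hz ω hωn hR hmem
    exact ⟨ω, hωn, by rw [hS]; rw [show (1 + (‖x + z‖ - 1)) = ‖x + z‖ by ring, hrec]⟩

lemma Sop_zero (ρ : E → ℝ) (hρ : ContDiff ℝ 1 ρ)
    (hb : ∀ x, |ρ x| < (1:ℝ)/100 ∧ ‖fderiv ℝ ρ x‖ < (1:ℝ)/100)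
    (ω : E) (hω : ‖ω‖ = 1) : Sop 0 ρ ω = ρ ω := by
  have hbω := abs_lt.mp (hb ω).1
  have hpos : (0:ℝ) < 1 + ρ ω := by linarith
  have hm : (1 + ρ ω) • ω - 0 ∈ Mset ρ := by
    rw [sub_zero]; exact ⟨ω, hω, rfl⟩
  have := Sop_eq ρ hρ hb 0 (by simp) ω hω hpos hm
  rw [this]; ring

lemma Sop_through (ρ : E → ℝ) (hρ : ContDiff ℝ 1 ρ)
    (hb : ∀ x, |ρ x| < (1:ℝ)/100 ∧ ‖fderiv ℝ ρ x‖ < (1:ℝ)/100)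
    (z w : E) (hz : ‖z‖ ≤ 1/50) (hw : ‖w‖ ≤ 1/50) (hzw : ‖z + w‖ ≤ 1/50)
    (ω : E) (hω : ‖ω‖ = 1) : Sop z (Sop w ρ) ω = Sop (z + w) ρ ω := by
  have hgr : Mset (Sop w ρ) = (fun y => y + w) '' Mset ρ := graph_eq ρ hρ hb w hw
  obtain ⟨hpos2, hmem2⟩ := Sop_spec ρ hρ hb (z + w) hzw ω hω
  have hmem2' : (1 + Sop (z + w) ρ ω) • ω - z ∈ Mset (Sop w ρ) := by
    rw [hgr]
    refine ⟨(1 + Sop (z + w) ρ ω) • ω - (z + w), hmem2, ?_⟩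
    show (1 + Sop (z + w) ρ ω) • ω - (z + w) + w = _
    rw [sub_add, add_sub_cancel_right]
  have hex : ∃ r : ℝ, 0 < r ∧ r • ω - z ∈ Mset (Sop w ρ) :=
    ⟨1 + Sop (z + w) ρ ω, hpos2, hmem2'⟩
  have hS : Sop z (Sop w ρ) ω = hex.choose - 1 := by
    simp only [Sop, dif_pos hex]
  obtain ⟨hcpos, hcmem⟩ := hex.choose_spec
  obtain ⟨x, hx, hxe⟩ := (Set.ext_iff.mp hgr _).mp hcmem
  have hxm : hex.choose • ω - (z + w) ∈ Mset ρ := by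
    have hxe' : x + w = hex.choose • ω - z := hxe
    have : hex.choose • ω - (z + w) = x := by
      rw [sub_add_eq_sub_sub, ← hxe', add_sub_cancel_right]
    rw [this]; exact hx
  have huni := unique_r ρ hρ hb (z + w) hzw ω hω hcpos hpos2 hxm hmem2
  rw [hS, huni]; ring


/-- the translations of `ℝ³` act on star-shaped graphs over the unit
sphere. For sufficiently small `τ, δ > 0` there is an operator family `S_z^*` such that
for every `z` with `‖z‖ < τ` and every C¹ function `ρ` with `‖ρ‖_{C¹} < δ`, the translate
by `z` of the surface `Γ_ρ = {(1+ρ(ω))ω : ω ∈ S²}` is the graph surface of `S_z^*(ρ)`,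
and the (local) group laws `S_z^* ∘ S_w^* = S_{z+w}^*`, `S_0^* = id`,
`(S_z^*)⁻¹ = S_{−z}^*` hold. -/
theorem stmt_14 :
    ∃ τ : ℝ, 0 < τ ∧ ∃ δ : ℝ, 0 < δ ∧
    ∃ S : EuclideanSpace ℝ (Fin 3) → (EuclideanSpace ℝ (Fin 3) → ℝ) →
          (EuclideanSpace ℝ (Fin 3) → ℝ),
      (∀ z : EuclideanSpace ℝ (Fin 3), ‖z‖ < τ →
        ∀ ρ : EuclideanSpace ℝ (Fin 3) → ℝ, ContDiff ℝ 1 ρ →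
          (∀ x, |ρ x| < δ ∧ ‖fderiv ℝ ρ x‖ < δ) →
          {y : EuclideanSpace ℝ (Fin 3) | ∃ ω, ‖ω‖ = 1 ∧ y = (1 + S z ρ ω) • ω}
            = (fun y => y + z) ''
                {y : EuclideanSpace ℝ (Fin 3) | ∃ ω, ‖ω‖ = 1 ∧ y = (1 + ρ ω) • ω}) ∧
      (∀ z w : EuclideanSpace ℝ (Fin 3), ‖z‖ < τ → ‖w‖ < τ → ‖z + w‖ < τ →
        ∀ ρ : EuclideanSpace ℝ (Fin 3) → ℝ, ContDiff ℝ 1 ρ →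
          (∀ x, |ρ x| < δ ∧ ‖fderiv ℝ ρ x‖ < δ) →
          (∀ ω : EuclideanSpace ℝ (Fin 3), ‖ω‖ = 1 →
            S z (S w ρ) ω = S (z + w) ρ ω ∧
            S 0 ρ ω = ρ ω ∧
            S (-z) (S z ρ) ω = ρ ω)) := by
  refine ⟨1/100, by norm_num, 1/100, by norm_num, Sop, ?_, ?_⟩
  · intro z hz ρ hρ hb
    exact graph_eq ρ hρ hb z (by linarith)
  · intro z w hz hw hzw ρ hρ hb ω hω
    refine ⟨Sop_through ρ hρ hb z w (by linarith) (by linarith) (by linarith) ω hω,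
      Sop_zero ρ hρ hb ω hω, ?_⟩
    have h1 : Sop (-z) (Sop z ρ) ω = Sop (-z + z) ρ ω := by
      refine Sop_through ρ hρ hb (-z) z ?_ (by linarith) ?_ ω hω
      · rw [norm_neg]; linarith
      · rw [neg_add_cancel, norm_zero]; norm_num
    rw [h1, neg_add_cancel, Sop_zero ρ hρ hb ω hω]
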